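/- For every n ≥ 1 and every R > 1, W_m^* tends to +∞ uniformly on { x ∈ ℝ^n : ‖x‖ ≥ R } as m → ∞; that is, for every C ∈ ℝ there exists m₀ > 0 such that W_m^*(x) ≥ C whenever m ≥ m₀ and ‖x‖ ≥ R. -/

import Mathlib

noncomputable section

/-- The regularized energy density `W_m(p) = (‖p‖² + m⁻²)^{1/2} + m⁻¹‖p‖²`. -/
def Wfun (n : ℕ) (m : ℝ) (p : EuclideanSpace ℝ (Fin n)) : ℝ :=
  Real.sqrt (‖p‖ ^ 2 + m⁻¹ ^ 2) + m⁻¹ * ‖p‖ ^ 2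

/-- The Legendre–Fenchel conjugate `W_m^*(x) = sup_p (⟨p,x⟩ - W_m(p))`. -/
def Wstar (n : ℕ) (m : ℝ) (x : EuclideanSpace ℝ (Fin n)) : ℝ :=
  sSup (Set.range fun p => (inner ℝ p x : ℝ) - Wfun n m p)

lemma Wstar_bddAbove (n : ℕ) (m : ℝ) (hm : 0 < m) (x : EuclideanSpace ℝ (Fin n)) :
    BddAbove (Set.range fun p => (inner ℝ p x : ℝ) - Wfun n m p) := by
  refine ⟨m * ‖x‖ ^ 2 / 4, ?_⟩
  rintro y ⟨p, rfl⟩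
  have h1 : (inner ℝ p x : ℝ) ≤ ‖p‖ * ‖x‖ := real_inner_le_norm p x
  have h2 : 0 ≤ Real.sqrt (‖p‖ ^ 2 + m⁻¹ ^ 2) := Real.sqrt_nonneg _
  have hmi : m * m⁻¹ = 1 := mul_inv_cancel₀ hm.ne'
  have hmi0 : 0 < m⁻¹ := inv_pos.mpr hm
  simp only [Wfun]
  nlinarith [mul_nonneg hmi0.le (sq_nonneg (‖p‖ - m * ‖x‖ / 2))]

/-- `W_m^* → +∞` uniformly on `{‖x‖ ≥ R}` for any `R > 1` as `m → ∞`. -/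
theorem Wstar_tendsto_top (n : ℕ) (hn : 1 ≤ n) (R : ℝ) (hR : 1 < R) :
    ∀ C : ℝ, ∃ m₀ > (0 : ℝ), ∀ m ≥ m₀, ∀ x : EuclideanSpace ℝ (Fin n), R ≤ ‖x‖ →
      C ≤ Wstar n m x := by
  intro C
  set t : ℝ := (|C| + 1) / (R - 1) with ht
  have hR1 : 0 < R - 1 := by linarith
  have ht0 : 0 ≤ t := div_nonneg (by positivity) hR1.le
  have htR : t * (R - 1) = |C| + 1 := div_mul_cancel₀ _ hR1.ne'
  refine ⟨1 + t ^ 2, by positivity, ?_⟩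
  intro m hm x hx
  have hm0 : 0 < m := lt_of_lt_of_le (by positivity) hm
  have hx0 : 0 < ‖x‖ := by linarith
  set p : EuclideanSpace ℝ (Fin n) := (t / ‖x‖) • x with hp
  have hinner : (inner ℝ p x : ℝ) = t * ‖x‖ := by
    rw [hp, real_inner_smul_left, real_inner_self_eq_norm_sq]
    field_simp
  have hnp : ‖p‖ = t := by
    rw [hp, norm_smul, Real.norm_eq_abs, abs_div, abs_of_nonneg ht0,
      abs_of_pos hx0]
    field_simp
  have hsqrt : Real.sqrt (t ^ 2 + m⁻¹ ^ 2) ≤ t + m⁻¹ := by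
    have hmi0 : 0 ≤ m⁻¹ := (inv_pos.mpr hm0).le
    rw [show t ^ 2 + m⁻¹ ^ 2 = (t + m⁻¹)^2 - 2*t*m⁻¹ by ring]
    calc Real.sqrt ((t + m⁻¹)^2 - 2*t*m⁻¹) ≤ Real.sqrt ((t + m⁻¹)^2) :=
          Real.sqrt_le_sqrt (by nlinarith)
      _ = t + m⁻¹ := Real.sqrt_sq (by positivity)
  have key : C ≤ (inner ℝ p x : ℝ) - Wfun n m p := by
    rw [hinner, Wfun, hnp]
    have hmi0 : 0 < m⁻¹ := inv_pos.mpr hm0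
    have hle : m⁻¹ * (1 + t ^ 2) ≤ 1 := by
      rw [inv_mul_le_iff₀ hm0]
      linarith
    have h1 : t * ‖x‖ ≥ t * R := mul_le_mul_of_nonneg_left hx ht0
    have h2 : C ≤ |C| := le_abs_self C
    linarith
  exact key.trans (le_csSup (Wstar_bddAbove n m hm0 x) ⟨p, rfl⟩)
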